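/- Let d ≥ 1, let W'_0, …, W'_{d-1} be unitary 2×2 complex matrices, let H be the d×d Fourier matrix, and set W = Σ_{i<d} W'_i ⊗ (H|i⟩⟨i|H†), a unitary on ℂ²⊗ℂ^d. Then for every linear map E on M₂(ℂ) and every ρ ∈ M₂(ℂ), tr₂[ W† · ((E ⊗ id_{M_d(ℂ)})( W (ρ ⊗ |0⟩⟨0|) W† )) · W ] = (1/d) Σ_{i<d} W'_i† · E(W'_i ρ W'_i†) · W'_i; that is, the supermap built from W realizes the uniform twirl of E by the set {W'_0, …, W'_{d-1}}. -/

import Mathlib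

open Matrix
open scoped Kronecker BigOperators

/-- The `d × d` Fourier matrix, with entries `e^{2πi jk/d}/√d`. -/
noncomputable def fourierMat (d : ℕ) : Matrix (Fin d) (Fin d) ℂ :=
  Matrix.of fun j k : Fin d =>
    Complex.exp (2 * Real.pi * Complex.I * (j : ℕ) * (k : ℕ) / d) / (Real.sqrt d : ℂ)

/-- The action of `E ⊗ id` on `M₂(ℂ) ⊗ M_d(ℂ)`, acting as `E` on the first tensor
factor and as the identity on the second. -/
noncomputable def tensorMap (d : ℕ)
    (E : Matrix (Fin 2) (Fin 2) ℂ →ₗ[ℂ] Matrix (Fin 2) (Fin 2) ℂ)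
    (M : Matrix (Fin 2 × Fin d) (Fin 2 × Fin d) ℂ) :
    Matrix (Fin 2 × Fin d) (Fin 2 × Fin d) ℂ :=
  Matrix.of fun p q => E (Matrix.of fun a b => M (a, p.2) (b, q.2)) p.1 q.1

/-- Partial trace over the second tensor factor. -/
noncomputable def ptrace2 (n d : ℕ)
    (M : Matrix (Fin n × Fin d) (Fin n × Fin d) ℂ) : Matrix (Fin n) (Fin n) ℂ :=
  Matrix.of fun a b => ∑ m : Fin d, M (a, m) (b, m)

lemma exp_sum_eq (d : ℕ) (hd : 0 < d) (i j : Fin d) :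
    ∑ m : Fin d, Complex.exp (2 * Real.pi * Complex.I * (((j:ℕ):ℂ) - ((i:ℕ):ℂ)) / d) ^ (m:ℕ)
      = if i = j then (d : ℂ) else 0 := by
  have hd' : (d:ℂ) ≠ 0 := Nat.cast_ne_zero.2 hd.ne'
  rcases eq_or_ne i j with h | h
  · subst h; simp
  · rw [if_neg h]
    set ω : ℂ := Complex.exp (2 * Real.pi * Complex.I * (((j:ℕ):ℂ) - ((i:ℕ):ℂ)) / d) with hωdef
    have h2πI : (2 * Real.pi * Complex.I : ℂ) ≠ 0 := by
      simp [Real.pi_ne_zero, Complex.I_ne_zero]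
    have hω_ne : ω ≠ 1 := by
      intro hω
      rw [hωdef, Complex.exp_eq_one_iff] at hω
      obtain ⟨n, hn⟩ := hω
      have hn' : (((j:ℕ):ℂ) - ((i:ℕ):ℂ)) = n * d := by
        field_simp at hn
        have h2 : (((j:ℕ):ℂ) - ((i:ℕ):ℂ)) * (2 * Real.pi * Complex.I)
            = (n * d) * (2 * Real.pi * Complex.I) := by
          linear_combination (2 * Real.pi * Complex.I) * hn
        exact mul_right_cancel₀ h2πI h2
      have hz : ((j:ℕ):ℤ) - ((i:ℕ):ℤ) = n * d := by
        exact_mod_cast hn'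
      have hjd : ((j:ℕ):ℤ) < d := by exact_mod_cast j.isLt
      have hid : ((i:ℕ):ℤ) < d := by exact_mod_cast i.isLt
      have hdvd : (d:ℤ) ∣ ((j:ℕ):ℤ) - ((i:ℕ):ℤ) := ⟨n, by linarith [hz]⟩
      have habs : |((j:ℕ):ℤ) - ((i:ℕ):ℤ)| < d := by
        rw [abs_lt]
        constructor <;> [linarith [Int.ofNat_nonneg (j:ℕ)]; linarith [Int.ofNat_nonneg (i:ℕ)]]
      have := Int.eq_zero_of_abs_lt_dvd hdvd habs
      have hji : (j:ℕ) = (i:ℕ) := by omega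
      exact h (Fin.ext hji.symm)
    have hωd : ω ^ d = 1 := by
      rw [hωdef, ← Complex.exp_nat_mul]
      have : (d:ℂ) * (2 * Real.pi * Complex.I * (((j:ℕ):ℂ) - ((i:ℕ):ℂ)) / d)
          = ((((j:ℕ):ℤ) - ((i:ℕ):ℤ) : ℤ) : ℂ) * (2 * Real.pi * Complex.I) := by
        push_cast; field_simp
      rw [this, Complex.exp_int_mul_two_pi_mul_I]
    rw [Fin.sum_univ_eq_sum_range (fun m => ω ^ m) d, geom_sum_eq hω_ne, hωd]
    simp

lemma fourier_unitary (d : ℕ) (hd : 0 < d) : (fourierMat d)ᴴ * fourierMat d = 1 := by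
  have hd' : (d:ℂ) ≠ 0 := Nat.cast_ne_zero.2 hd.ne'
  have hsd : ((Real.sqrt d : ℝ):ℂ) * ((Real.sqrt d : ℝ):ℂ) = (d:ℂ) := by
    rw [← Complex.ofReal_mul, Real.mul_self_sqrt (Nat.cast_nonneg d)]
    norm_num
  ext i j
  rw [Matrix.mul_apply]
  have hterm : ∀ m : Fin d, (fourierMat d)ᴴ i m * fourierMat d m j
      = Complex.exp (2 * Real.pi * Complex.I * (((j:ℕ):ℂ) - ((i:ℕ):ℂ)) / d) ^ (m:ℕ) / d := by
    intro m
    rw [← Complex.exp_nat_mul]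
    simp only [fourierMat, conjTranspose_apply, Matrix.of_apply, star_div₀, Complex.star_def]
    rw [← Complex.exp_conj]
    have hconj : (starRingEnd ℂ) (2 * Real.pi * Complex.I * ((m:ℕ):ℂ) * ((i:ℕ):ℂ) / d)
        = -(2 * Real.pi * Complex.I * ((m:ℕ):ℂ) * ((i:ℕ):ℂ) / d) := by
      simp [map_div₀, _root_.map_mul, Complex.conj_I, Complex.conj_ofNat]
      ring
    rw [hconj]
    have hstar : ((starRingEnd ℂ) ((Real.sqrt d : ℝ):ℂ)) = ((Real.sqrt d : ℝ):ℂ) :=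
      Complex.conj_ofReal _
    rw [hstar, div_mul_div_comm, ← Complex.exp_add, hsd]
    congr 2
    field_simp
    ring
  rw [Finset.sum_congr rfl (fun m _ => hterm m), ← Finset.sum_div, exp_sum_eq d hd i j]
  rcases eq_or_ne i j with h | h
  · subst h; simp [Matrix.one_apply, hd']
  · simp [Matrix.one_apply, h]

lemma kron_conjT {n d : ℕ} (A : Matrix (Fin n) (Fin n) ℂ) (B : Matrix (Fin d) (Fin d) ℂ) :
    (A ⊗ₖ B)ᴴ = Aᴴ ⊗ₖ Bᴴ := by
  ext p q
  simp [Matrix.conjTranspose_apply, Matrix.kroneckerMap_apply, star_mul']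

lemma tensorMap_kron (d : ℕ)
    (E : Matrix (Fin 2) (Fin 2) ℂ →ₗ[ℂ] Matrix (Fin 2) (Fin 2) ℂ)
    (A : Matrix (Fin 2) (Fin 2) ℂ) (B : Matrix (Fin d) (Fin d) ℂ) :
    tensorMap d E (A ⊗ₖ B) = (E A) ⊗ₖ B := by
  ext p q
  have h : (Matrix.of fun a b => (A ⊗ₖ B) (a, p.2) (b, q.2)) = B p.2 q.2 • A := by
    ext a b
    simp [Matrix.kroneckerMap_apply, mul_comm]
  show E (Matrix.of fun a b => (A ⊗ₖ B) (a, p.2) (b, q.2)) p.1 q.1 = (E A ⊗ₖ B) p q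
  rw [h, _root_.map_smul]
  simp [Matrix.kroneckerMap_apply, mul_comm]

lemma tensorMap_sum (d : ℕ)
    (E : Matrix (Fin 2) (Fin 2) ℂ →ₗ[ℂ] Matrix (Fin 2) (Fin 2) ℂ)
    {ι : Type*} (s : Finset ι) (f : ι → Matrix (Fin 2 × Fin d) (Fin 2 × Fin d) ℂ) :
    tensorMap d E (∑ i ∈ s, f i) = ∑ i ∈ s, tensorMap d E (f i) := by
  ext p q
  have h : (Matrix.of fun a b => (∑ i ∈ s, f i) (a, p.2) (b, q.2))
      = ∑ i ∈ s, Matrix.of fun a b => f i (a, p.2) (b, q.2) := by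
    ext a b
    simp [Matrix.sum_apply]
  show E (Matrix.of fun a b => (∑ i ∈ s, f i) (a, p.2) (b, q.2)) p.1 q.1
      = (∑ i ∈ s, tensorMap d E (f i)) p q
  rw [h, map_sum, Matrix.sum_apply, Matrix.sum_apply]
  rfl

lemma ptrace2_sum (n d : ℕ) {ι : Type*} (s : Finset ι)
    (f : ι → Matrix (Fin n × Fin d) (Fin n × Fin d) ℂ) :
    ptrace2 n d (∑ i ∈ s, f i) = ∑ i ∈ s, ptrace2 n d (f i) := by
  ext a b
  simp only [ptrace2, Matrix.of_apply, Matrix.sum_apply]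
  exact Finset.sum_comm

lemma ptrace2_kron (n d : ℕ) (A : Matrix (Fin n) (Fin n) ℂ) (B : Matrix (Fin d) (Fin d) ℂ) :
    ptrace2 n d (A ⊗ₖ B) = B.trace • A := by
  ext a b
  simp only [ptrace2, Matrix.of_apply, Matrix.kroneckerMap_apply, Matrix.smul_apply,
    Matrix.trace, Matrix.diag_apply, smul_eq_mul, Finset.sum_mul]
  exact Finset.sum_congr rfl fun m _ => mul_comm _ _

theorem stmt0 (d : ℕ) (hd : 1 ≤ d)
    (W' : Fin d → Matrix (Fin 2) (Fin 2) ℂ)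
    (hW' : ∀ i, W' i ∈ Matrix.unitaryGroup (Fin 2) ℂ)
    (W : Matrix (Fin 2 × Fin d) (Fin 2 × Fin d) ℂ)
    (hW : W = ∑ i : Fin d,
      (W' i) ⊗ₖ (fourierMat d * single i i 1 * (fourierMat d)ᴴ))
    (E : Matrix (Fin 2) (Fin 2) ℂ →ₗ[ℂ] Matrix (Fin 2) (Fin 2) ℂ)
    (ρ : Matrix (Fin 2) (Fin 2) ℂ) :
    ptrace2 2 d
      (Wᴴ * tensorMap d E
        (W * (ρ ⊗ₖ single (⟨0, hd⟩ : Fin d) (⟨0, hd⟩ : Fin d) 1) * Wᴴ) * W)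
      = (1 / (d : ℂ)) •
          ∑ i : Fin d, (W' i)ᴴ * E (W' i * ρ * (W' i)ᴴ) * W' i := by
  have hd0 : 0 < d := hd
  have hd' : (d:ℂ) ≠ 0 := Nat.cast_ne_zero.2 hd0.ne'
  have hsd : ((Real.sqrt d : ℝ):ℂ) * ((Real.sqrt d : ℝ):ℂ) = (d:ℂ) := by
    rw [← Complex.ofReal_mul, Real.mul_self_sqrt (Nat.cast_nonneg d)]
    norm_num
  set z : Fin d := ⟨0, hd⟩ with hz
  set P : Fin d → Matrix (Fin d) (Fin d) ℂ :=
    fun i => fourierMat d * single i i 1 * (fourierMat d)ᴴ with hPdef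
  set e0 : Matrix (Fin d) (Fin d) ℂ := single z z 1 with he0
  -- orthogonality of the projections P i
  have hPmul : ∀ i j, P i * P j = if i = j then P i else 0 := by
    intro i j
    have h1 : P i * P j
        = fourierMat d * single i i 1 * ((fourierMat d)ᴴ * fourierMat d)
            * single j j 1 * (fourierMat d)ᴴ := by
      simp only [hPdef, Matrix.mul_assoc]
    rw [h1, fourier_unitary d hd0, Matrix.mul_one]
    rcases eq_or_ne i j with h | h
    · subst h
      rw [if_pos rfl,
        Matrix.mul_assoc (fourierMat d) (single i i 1) (single i i 1),
        Matrix.single_mul_single_same]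
      norm_num
      rfl
    · rw [if_neg h,
        Matrix.mul_assoc (fourierMat d) (single i i 1) (single j j 1),
        Matrix.single_mul_single_of_ne 1 i i j h 1]
      simp
  -- hermiticity of P i
  have heH : ∀ (i : Fin d), (single i i (1:ℂ))ᴴ = single i i 1 := by
    intro i
    ext a b
    simp [Matrix.conjTranspose_apply, Matrix.single, apply_ite, and_comm]
  have hPH : ∀ i, (P i)ᴴ = P i := by
    intro i
    simp only [hPdef, Matrix.conjTranspose_mul, Matrix.conjTranspose_conjTranspose, heH,
      Matrix.mul_assoc]
  have hWH : Wᴴ = ∑ i, (W' i)ᴴ ⊗ₖ P i := by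
    rw [hW, Matrix.conjTranspose_sum]
    refine Finset.sum_congr rfl fun i _ => ?_
    rw [kron_conjT, hPH]
  -- the value of P i at (z, z)
  have hPzz : ∀ i, (P i) z z = 1 / (d:ℂ) := by
    intro i
    have hPi : P i z z
        = ∑ b : Fin d, (fourierMat d * single i i 1 : Matrix (Fin d) (Fin d) ℂ) z b
            * (fourierMat d)ᴴ b z :=
      Matrix.mul_apply
    rw [hPi, Finset.sum_eq_single i]
    · rw [Matrix.mul_single_apply_same, Matrix.conjTranspose_apply]
      have hzv : ((z:ℕ):ℂ) = 0 := by simp [hz]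
      simp only [fourierMat, Matrix.of_apply, hzv, mul_zero, zero_mul, zero_div,
        Complex.exp_zero, mul_one, Complex.star_def, map_div₀, _root_.map_one]
      rw [Complex.conj_ofReal, div_mul_div_comm, one_mul, hsd]
    · intro b _ hb
      rw [Matrix.mul_single_apply_of_ne 1 i i z b hb, zero_mul]
    · simp
  have htr0 : ∀ M : Matrix (Fin d) (Fin d) ℂ, Matrix.trace (M * e0) = M z z := by
    intro M
    simp only [Matrix.trace, Matrix.diag_apply]
    rw [Finset.sum_eq_single z]
    · exact (Matrix.mul_single_apply_same 1 z z z M).trans (mul_one _)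
    · intro b _ hb
      exact Matrix.mul_single_apply_of_ne 1 z z b b hb M
    · simp
  have htrPe : ∀ i, Matrix.trace (P i * e0) = 1 / (d:ℂ) := by
    intro i; rw [htr0, hPzz]
  -- the key trace computation
  have htr : ∀ k i j l, Matrix.trace (P k * (P i * e0 * P j) * P l)
      = if k = i then (if i = j then (if j = l then 1/(d:ℂ) else 0) else 0) else 0 := by
    intro k i j l
    have h1 : P k * (P i * e0 * P j) * P l = (P k * P i) * e0 * (P j * P l) := by
      simp only [Matrix.mul_assoc]
    rw [h1, hPmul, hPmul]
    by_cases hki : k = i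
    · by_cases hij : i = j
      · by_cases hjl : j = l
        · simp only [hki, hij, hjl, eq_self_iff_true, if_true]
          rw [Matrix.trace_mul_cycle, hPmul, if_pos rfl]
          exact htrPe l
        · simp only [hki, hij, eq_self_iff_true, if_true, if_neg hjl]
          rw [Matrix.mul_zero, Matrix.trace_zero]
      · simp only [hki, eq_self_iff_true, if_true, if_neg hij]
        by_cases hjl : j = l
        · rw [if_pos hjl, Matrix.trace_mul_cycle, hPmul,
            if_neg (fun hh : j = i => hij hh.symm), Matrix.zero_mul, Matrix.trace_zero]
        · rw [if_neg hjl, Matrix.mul_zero, Matrix.trace_zero]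
    · simp only [if_neg hki, Matrix.zero_mul, Matrix.trace_zero]
  -- step 1 : expand W (ρ ⊗ e0) Wᴴ
  have step1 : W * (ρ ⊗ₖ e0) * Wᴴ
      = ∑ j, ∑ i, (W' i * ρ * (W' j)ᴴ) ⊗ₖ (P i * e0 * P j) := by
    rw [hWH, hW]
    simp only [Finset.sum_mul, Finset.mul_sum]
    refine Finset.sum_congr rfl fun j _ => Finset.sum_congr rfl fun i _ => ?_
    rw [Matrix.mul_kronecker_mul, Matrix.mul_kronecker_mul]
  have step2 : tensorMap d E (W * (ρ ⊗ₖ e0) * Wᴴ)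
      = ∑ j, ∑ i, (E (W' i * ρ * (W' j)ᴴ)) ⊗ₖ (P i * e0 * P j) := by
    rw [step1, tensorMap_sum]
    refine Finset.sum_congr rfl fun j _ => ?_
    rw [tensorMap_sum]
    refine Finset.sum_congr rfl fun i _ => ?_
    rw [tensorMap_kron]
  have step3 : Wᴴ * tensorMap d E (W * (ρ ⊗ₖ e0) * Wᴴ) * W
      = ∑ l, ∑ j, ∑ i, ∑ k,
          ((W' k)ᴴ * E (W' i * ρ * (W' j)ᴴ) * W' l) ⊗ₖ (P k * (P i * e0 * P j) * P l) := by
    rw [step2, hWH, hW]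
    simp only [Finset.sum_mul, Finset.mul_sum]
    refine Finset.sum_congr rfl fun l _ => Finset.sum_congr rfl fun j _ =>
      Finset.sum_congr rfl fun i _ => Finset.sum_congr rfl fun k _ => ?_
    rw [Matrix.mul_kronecker_mul, Matrix.mul_kronecker_mul]
  rw [step3, Finset.smul_sum]
  simp only [ptrace2_sum, ptrace2_kron, htr]
  simp only [ite_smul, zero_smul, Finset.sum_ite_eq, Finset.sum_ite_eq',
    Finset.mem_univ, if_true]
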